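/- For (n,k,d)=(4,3,3) exact-repair regenerating codes, the rate region R equals the entropy-symmetrical achievable region R*, i.e., a pair (ᾱ, β̄) is (4,3,3) exact-repair achievable if and only if it is symmetrically (4,3,3) exact-repair achievable. -/

import Mathlib

open MeasureTheory

/-- An `(N, K_d, K)` exact-repair regenerating code for `(n,k,d) = (4,3,3)`. -/
structure ExactRepairCode433 (N Kd K : ℕ) where
  f : Fin 4 → Fin N → Fin Kd
  F : Fin 4 → Fin 4 → Fin Kd → Fin K
  G : (j : Fin 4) → ({i : Fin 4 // i ≠ j} → Fin K) → Fin Kd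
  reconstruct : ∀ A : Finset (Fin 4), A.card = 3 →
    Function.Injective fun m : Fin N => fun i : A => f i m
  repair : ∀ (j : Fin 4) (m : Fin N),
    G j (fun i => F i.1 j (f i.1 m)) = f j m

/-- Shannon entropy (natural log) of a finitely-valued random variable `X`
under the measure `μ`. -/
noncomputable def shEnt {Ω : Type*} [MeasurableSpace Ω] {α : Type*} [Fintype α]
    (μ : Measure Ω) (X : Ω → α) : ℝ :=
  ∑ a : α, Real.negMulLog (μ (X ⁻¹' {a})).toReal

/-- The uniform probability measure on `Fin N`. -/
noncomputable def unifFin (N : ℕ) : Measure (Fin N) :=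
  (N : ENNReal)⁻¹ • Measure.count

/-- The index type of ordered pairs of distinct indices in `Fin 4`. -/
abbrev DistPair : Type := {p : Fin 4 × Fin 4 // p.1 ≠ p.2}

/-- A code induces a symmetric entropic vector if, with `W_i = f_i ∘ M` and
`S_{i,j} = F_{i,j} ∘ W_i` for the uniform message `M` on `Fin N`, every joint
entropy is invariant under permuting the node roles. -/
def InducesSymmetric {N Kd K : ℕ} (c : ExactRepairCode433 N Kd K) : Prop :=
  ∀ (π : Equiv.Perm (Fin 4)) (A : Finset (Fin 4)) (P : Finset DistPair),
    shEnt (unifFin N) (fun m =>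
      ((fun i : A => c.f i.1 m),
       (fun p : P => c.F p.1.1.1 p.1.1.2 (c.f p.1.1.1 m)))) =
    shEnt (unifFin N) (fun m =>
      ((fun i : A => c.f (π i.1) m),
       (fun p : P => c.F (π p.1.1.1) (π p.1.1.2) (c.f (π p.1.1.1) m))))

/-- A normalized pair `(ᾱ, β̄)` is `(4,3,3)` exact-repair achievable. -/
def Achievable433 (α β : ℝ) : Prop :=
  ∀ ε : ℝ, 0 < ε → ∃ (N Kd K : ℕ) (_ : ExactRepairCode433 N Kd K), 2 ≤ N ∧
    α + ε ≥ Real.log Kd / Real.log N ∧ β + ε ≥ Real.log K / Real.log N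

/-- A normalized pair `(ᾱ, β̄)` is symmetrically `(4,3,3)` exact-repair
achievable: as above, but with codes inducing symmetric entropic vectors. -/
def SymmAchievable433 (α β : ℝ) : Prop :=
  ∀ ε : ℝ, 0 < ε → ∃ (N Kd K : ℕ) (c : ExactRepairCode433 N Kd K), 2 ≤ N ∧
    InducesSymmetric c ∧
    α + ε ≥ Real.log Kd / Real.log N ∧ β + ε ≥ Real.log K / Real.log N

/- ### Auxiliary material for the proof -/

lemma shEnt_comp_inj {Ω : Type*} [MeasurableSpace Ω] {α β : Type*} [Fintype α] [Fintype β]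
    (μ : Measure Ω) (X : Ω → α) (g : α → β) (hg : Function.Injective g) :
    shEnt μ (fun ω => g (X ω)) = shEnt μ X := by
  classical
  unfold shEnt
  set h : β → ℝ := fun b => Real.negMulLog (μ ((fun ω => g (X ω)) ⁻¹' {b})).toReal with hh
  calc (∑ b : β, h b) = ∑ b ∈ Finset.univ.image g, h b := by
        refine (Finset.sum_subset (Finset.subset_univ _) ?_).symm
        intro b _ hb
        have he : (fun ω => g (X ω)) ⁻¹' {b} = ∅ := by
          ext ω; simp only [Set.mem_preimage, Set.mem_singleton_iff, Set.mem_empty_iff_false,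
            iff_false]
          intro hgb; exact hb (Finset.mem_image.mpr ⟨X ω, Finset.mem_univ _, hgb⟩)
        simp [hh, he]
    _ = ∑ a : α, h (g a) := Finset.sum_image (fun a _ b _ hab => hg hab)
    _ = ∑ a : α, Real.negMulLog (μ (X ⁻¹' {a})).toReal := by
        refine Finset.sum_congr rfl fun a _ => ?_
        have : (fun ω => g (X ω)) ⁻¹' {g a} = X ⁻¹' {a} := by
          ext ω; simp [hg.eq_iff]
        simp [hh, this]

lemma shEnt_comp_equiv {N : ℕ} {α : Type*} [Fintype α] (X : Fin N → α) (T : Fin N ≃ Fin N) :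
    shEnt (unifFin N) (fun m => X (T m)) = shEnt (unifFin N) X := by
  unfold shEnt
  refine Finset.sum_congr rfl fun a _ => ?_
  have hc : Measure.count ((fun m => X (T m)) ⁻¹' {a}) = Measure.count (X ⁻¹' {a}) := by
    have hp : (fun m => X (T m)) ⁻¹' {a} = ⇑T ⁻¹' (X ⁻¹' {a}) := rfl
    rw [hp, Measure.count_apply_finite _ (Set.toFinite _),
      Measure.count_apply_finite _ (Set.toFinite _)]
    norm_cast
    exact Finset.card_bij (fun a _ => T a) (by simp) (fun a _ b _ h => T.injective h)
      (fun b hb => ⟨T.symm b, by simpa using hb, by simp⟩)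
  simp [unifFin, hc]

abbrev P4 : Type := Equiv.Perm (Fin 4)

noncomputable def eFun (M : ℕ) : (P4 → Fin M) ≃ Fin (M ^ 24) :=
  Fintype.equivFinOfCardEq (by rw [Fintype.card_fun]; simp [Fintype.card_perm]; rfl)

/-- The symmetrized product code over all 24 permutations of the node roles. -/
noncomputable def symCode {N Kd K : ℕ} (c : ExactRepairCode433 N Kd K) :
    ExactRepairCode433 (N ^ 24) (Kd ^ 24) (K ^ 24) where
  f i m := eFun Kd (fun π => c.f (π⁻¹ i) ((eFun N).symm m π))
  F i j x := eFun K (fun π => c.F (π⁻¹ i) (π⁻¹ j) ((eFun Kd).symm x π))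
  G j s := eFun Kd (fun π => c.G (π⁻¹ j) (fun i =>
    (eFun K).symm (s ⟨π i.1, fun h => i.2 (Equiv.Perm.eq_inv_iff_eq.mpr h)⟩) π))
  reconstruct := by
    intro A hA m m' h
    apply (eFun N).symm.injective
    funext π
    have hB : (A.image ⇑π⁻¹).card = 3 := by
      rw [Finset.card_image_of_injective _ (Equiv.injective _), hA]
    apply c.reconstruct _ hB
    funext b
    obtain ⟨i, hi, hb⟩ := Finset.mem_image.mp b.2
    have h1 : eFun Kd (fun π => c.f (π⁻¹ i) ((eFun N).symm m π))
        = eFun Kd (fun π => c.f (π⁻¹ i) ((eFun N).symm m' π)) := congrFun h ⟨i, hi⟩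
    have h2 := congrFun ((eFun Kd).injective h1) π
    simpa [← hb] using h2
  repair := by
    intro j m
    apply congrArg
    funext π
    simp only [Equiv.symm_apply_apply, Equiv.Perm.coe_inv]
    exact c.repair (π⁻¹ j) ((eFun N).symm m π)

/-- Reindexing equivalence on `Fin (M ^ 24)` induced by left multiplication by `σ`. -/
noncomputable def reEquiv (M : ℕ) (σ : P4) : Fin (M ^ 24) ≃ Fin (M ^ 24) :=
  (eFun M).symm.trans ((Equiv.arrowCongr (Equiv.mulLeft σ) (Equiv.refl (Fin M))).trans (eFun M))

lemma reEquiv_symm_apply (M : ℕ) (σ : P4) (x : Fin (M ^ 24)) (π : P4) :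
    (eFun M).symm (reEquiv M σ x) π = (eFun M).symm x (σ⁻¹ * π) := by
  simp [reEquiv, Equiv.arrowCongr]

lemma key_f {N Kd K : ℕ} (c : ExactRepairCode433 N Kd K) (σ : P4) (i : Fin 4)
    (m : Fin (N ^ 24)) :
    (symCode c).f (σ i) m = reEquiv Kd σ ((symCode c).f i (reEquiv N σ⁻¹ m)) := by
  apply (eFun Kd).symm.injective
  funext π
  rw [reEquiv_symm_apply]
  simp only [symCode, Equiv.symm_apply_apply, reEquiv_symm_apply]
  simp [mul_assoc, Equiv.Perm.mul_apply]

lemma key_F {N Kd K : ℕ} (c : ExactRepairCode433 N Kd K) (σ : P4) (i j : Fin 4)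
    (m : Fin (N ^ 24)) :
    (symCode c).F (σ i) (σ j) ((symCode c).f (σ i) m) =
      reEquiv K σ ((symCode c).F i j ((symCode c).f i (reEquiv N σ⁻¹ m))) := by
  apply (eFun K).symm.injective
  funext π
  rw [reEquiv_symm_apply]
  simp only [symCode, Equiv.symm_apply_apply, reEquiv_symm_apply]
  simp [mul_assoc, Equiv.Perm.mul_apply]

lemma symCode_symm {N Kd K : ℕ} (c : ExactRepairCode433 N Kd K) :
    InducesSymmetric (symCode c) := by
  intro σ A P
  set c' := symCode c
  set T : Fin (N ^ 24) ≃ Fin (N ^ 24) := reEquiv N σ⁻¹ with hT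
  set g : ((A → Fin (Kd ^ 24)) × (P → Fin (K ^ 24))) ≃
      ((A → Fin (Kd ^ 24)) × (P → Fin (K ^ 24))) :=
    Equiv.prodCongr
      (Equiv.arrowCongr (Equiv.refl A) (reEquiv Kd σ))
      (Equiv.arrowCongr (Equiv.refl P) (reEquiv K σ)) with hg
  set X : Fin (N ^ 24) → ((A → Fin (Kd ^ 24)) × (P → Fin (K ^ 24))) :=
    fun m => ((fun i : A => c'.f i.1 m),
      (fun p : P => c'.F p.1.1.1 p.1.1.2 (c'.f p.1.1.1 m))) with hX
  have hY : (fun m => ((fun i : A => c'.f (σ i.1) m),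
      (fun p : P => c'.F (σ p.1.1.1) (σ p.1.1.2) (c'.f (σ p.1.1.1) m)))) =
      fun m => g (X (T m)) := by
    funext m
    refine Prod.ext ?_ ?_
    · funext i
      exact key_f c σ i.1 m
    · funext p
      exact key_F c σ p.1.1.1 p.1.1.2 m
  rw [hY]
  rw [show (fun m => g (X (T m))) = (fun m => g ((fun m' => X (T m')) m)) from rfl]
  rw [shEnt_comp_inj _ _ _ g.injective, shEnt_comp_equiv X T]

/-- For `(4,3,3)` exact-repair regenerating codes the rate region equals the
entropy-symmetrical achievable region: `(ᾱ, β̄)` is achievable iff it is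
symmetrically achievable. -/
theorem statement7 (α β : ℝ) :
    Achievable433 α β ↔ SymmAchievable433 α β := by
  constructor
  · intro h ε hε
    obtain ⟨N, Kd, K, c, hN, hα, hβ⟩ := h ε hε
    have hratio : ∀ M : ℕ, Real.log ((M ^ 24 : ℕ) : ℝ) = 24 * Real.log M := by
      intro M; push_cast; rw [Real.log_pow]; norm_num
    refine ⟨N ^ 24, Kd ^ 24, K ^ 24, symCode c, ?_, symCode_symm c, ?_, ?_⟩
    · calc 2 ≤ N := hN
        _ ≤ N ^ 24 := Nat.le_self_pow (by norm_num) N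
    · rw [hratio, hratio, mul_div_mul_left _ _ (by norm_num : (24:ℝ) ≠ 0)]
      exact hα
    · rw [hratio, hratio, mul_div_mul_left _ _ (by norm_num : (24:ℝ) ≠ 0)]
      exact hβ
  · intro h ε hε
    obtain ⟨N, Kd, K, c, hN, _, hα, hβ⟩ := h ε hε
    exact ⟨N, Kd, K, c, hN, hα, hβ⟩
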